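/- For all integers r, q ≥ 3 and distinct elements a_1, …, a_r, b_1, …, b_q, the set of quartets Q = { a_i a_{i+1} | b_j b_{j+1} : 1 ≤ i ≤ r−1, 1 ≤ j ≤ q−1 } ∪ { a_1 b_1 | a_r b_q } is incompatible; moreover, every proper subset of Q is compatible. -/

import Mathlib

open SimpleGraph

namespace LeafPaper

/-- A leaf of a graph: a vertex with exactly one neighbor. -/
def IsLeaf {W : Type} (T : SimpleGraph W) (w : W) : Prop := ∃! u, T.Adj w u

/-- The edge list of the (unique, if `T` is a tree) path between `x` and `y`. -/
noncomputable def treePathEdges {W : Type} (T : SimpleGraph W) (x y : W) :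
    List (Sym2 W) := by
  classical
  exact if h : T.Reachable x y then (Classical.choice h).bypass.edges else []

/-- The weighted distance between `x` and `y` in a tree `T` with edge weighting `f`:
the sum of the weights of the edges on the (unique) path between `x` and `y`. -/
noncomputable def wdist {W : Type} (T : SimpleGraph W) (f : Sym2 W → ℕ) (x y : W) : ℕ :=
  ((treePathEdges T x y).map f).sum

/-- `(T, f)` is a leaf root of `G` with threshold `k`, where `ι` identifies the
vertices of `G` with the leaves of `T`. -/
def IsLeafRoot {V W : Type} (G : SimpleGraph V) (T : SimpleGraph W) (ι : V → W)
    (f : Sym2 W → ℕ) (k : ℕ) : Prop :=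
  T.IsTree ∧ Function.Injective ι ∧ (∀ w : W, IsLeaf T w ↔ w ∈ Set.range ι) ∧
    (∀ e ∈ T.edgeSet, 0 < f e) ∧
    ∀ u v : V, u ≠ v → (G.Adj u v ↔ wdist T f (ι u) (ι v) ≤ k)

/-- An unweighted tree `T` is an unweighted leaf root of `G` if some positive
integer weighting of its edges makes it a leaf root of `G`. -/
def IsUnweightedLeafRoot {V W : Type} (G : SimpleGraph V) (T : SimpleGraph W)
    (ι : V → W) : Prop :=
  ∃ (f : Sym2 W → ℕ) (k : ℕ), IsLeafRoot G T ι f k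

/-- `G` is a leaf power: there are a finite tree `T` whose leaf set is exactly `V(G)`
and a positive threshold `k` such that distinct vertices are adjacent in `G` iff their
tree distance is at most `k`. -/
def IsLeafPower {V : Type} (G : SimpleGraph V) : Prop :=
  ∃ (W : Type) (T : SimpleGraph W) (ι : V → W) (k : ℕ),
    Finite W ∧ T.IsTree ∧ Function.Injective ι ∧
      (∀ w : W, IsLeaf T w ↔ w ∈ Set.range ι) ∧ 0 < k ∧
      ∀ u v : V, u ≠ v → (G.Adj u v ↔ T.dist (ι u) (ι v) ≤ k)

/-- An alternating cycle `(x 0, y 0, x 1, y 1, …)` of `G`: `2c` distinct vertices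
such that `x i y i` is an edge and `y i x (i+1)` is a non-edge (indices mod `c`). -/
def IsAltCycle {V : Type} (G : SimpleGraph V) (c : ℕ) (x y : ZMod c → V) : Prop :=
  2 ≤ c ∧ Function.Injective (Sum.elim x y) ∧
    ∀ i : ZMod c, G.Adj (x i) (y i) ∧ ¬ G.Adj (y i) (x (i + 1))

/-- The weighted tree `(T, f)` satisfies the alternating cycle given by `x, y`
with threshold `k`. -/
def Satisfies {V W : Type} (T : SimpleGraph W) (f : Sym2 W → ℕ) (ι : V → W)
    (c : ℕ) (x y : ZMod c → V) (k : ℕ) : Prop :=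
  ∀ i : ZMod c, wdist T f (ι (x i)) (ι (y i)) ≤ k ∧
    k < wdist T f (ι (y i)) (ι (x (i + 1)))

/-- The unweighted tree `T` can satisfy the alternating cycle given by `x, y`. -/
def CanSatisfy {V W : Type} (T : SimpleGraph W) (ι : V → W) (c : ℕ)
    (x y : ZMod c → V) : Prop :=
  ∃ (f : Sym2 W → ℕ) (k : ℕ), (∀ e ∈ T.edgeSet, 0 < f e) ∧ Satisfies T f ι c x y k

/-- `T` contains the quartet `ab|cd`: the four vertices are distinct leaves of `T` and
the path between `a` and `b` is vertex-disjoint from the path between `c` and `d`. -/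
def ContainsQuartet {W : Type} (T : SimpleGraph W) (a b c d : W) : Prop :=
  IsLeaf T a ∧ IsLeaf T b ∧ IsLeaf T c ∧ IsLeaf T d ∧ a ≠ b ∧ c ≠ d ∧
    ∀ (p : T.Walk a b) (p' : T.Walk c d), p.IsPath → p'.IsPath →
      ∀ w : W, w ∈ p.support → w ∉ p'.support


/-- A set of quartets (given as ordered 4-tuples `(a, b, c, d)` representing `ab|cd`)
is compatible if some tree contains all of them. -/
def CompatibleFam {α : Type} (Q : Set (α × α × α × α)) : Prop :=
  ∃ (W : Type) (T : SimpleGraph W) (ι : α → W),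
    T.IsTree ∧ Function.Injective ι ∧
      ∀ t ∈ Q, ContainsQuartet T (ι t.1) (ι t.2.1) (ι t.2.2.1) (ι t.2.2.2)

/-- The set of quartets
`{ a_i a_{i+1} | b_j b_{j+1} : 1 ≤ i ≤ r-1, 1 ≤ j ≤ q-1 } ∪ { a_1 b_1 | a_r b_q }`
(here `a`, `b` are indexed by `Fin r`, `Fin q`, i.e. `0`-based). -/
def shuttersQ {α : Type} (r q : ℕ) (a : Fin r → α) (b : Fin q → α) :
    Set (α × α × α × α) :=
  {t | (∃ (i i' : Fin r) (j j' : Fin q),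
          i'.val = i.val + 1 ∧ j'.val = j.val + 1 ∧ t = (a i, a i', b j, b j')) ∨
       (∃ (i0 ir : Fin r) (j0 jq : Fin q),
          i0.val = 0 ∧ ir.val = r - 1 ∧ j0.val = 0 ∧ jq.val = q - 1 ∧
          t = (a i0, b j0, a ir, b jq))}

/-! ### Parent trees -/

section ParentTree

variable {W : Type} (par : W → W)

/-- The graph whose edges are `w — par w`. -/
def ptGraph : SimpleGraph W := SimpleGraph.fromRel (fun u v => par u = v)

lemma pt_adj {u v : W} :
    (ptGraph par).Adj u v ↔ u ≠ v ∧ (par u = v ∨ par v = u) := by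
  simp [ptGraph]

variable (rk : W → ℕ) (root : W)
variable (hroot : par root = root) (hrk : ∀ w, w ≠ root → rk (par w) < rk w)

include hroot hrk

lemma pt_rk_par_le (w : W) : rk (par w) ≤ rk w := by
  by_cases h : w = root
  · subst h; rw [hroot]
  · exact (hrk w h).le

lemma pt_rk_iter_le (n : ℕ) (w : W) : rk (par^[n] w) ≤ rk w := by
  induction n generalizing w with
  | zero => simp
  | succ n ih =>
    rw [Function.iterate_succ_apply]
    exact (ih (par w)).trans (pt_rk_par_le par rk root hroot hrk w)

lemma pt_reach_root (w : W) : (ptGraph par).Reachable w root := by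
  suffices h : ∀ n w, rk w = n → (ptGraph par).Reachable w root from h _ w rfl
  intro n
  induction n using Nat.strong_induction_on with
  | _ n ih =>
    intro w hn
    subst hn
    by_cases h : w = root
    · subst h; rfl
    · have hlt := hrk w h
      have hadj : (ptGraph par).Adj w (par w) := by
        rw [pt_adj]
        refine ⟨fun hc => ?_, Or.inl rfl⟩
        · rw [← hc] at hlt; omega
      exact (Adj.reachable hadj).trans (ih _ hlt (par w) rfl)


omit hroot hrk in
lemma pt_no_escape {v : W} (hv : v ≠ root) {x y : W}
    (p : ((ptGraph par) \ SimpleGraph.fromEdgeSet {s(v, par v)}).Walk x y)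
    (hx : ∃ n, par^[n] x = v) : ∃ n, par^[n] y = v := by
  induction p with
  | nil => exact hx
  | @cons x x' y h p ih =>
    apply ih
    rw [sdiff_adj, pt_adj, fromEdgeSet_adj] at h
    obtain ⟨⟨hne, hor⟩, hne'⟩ := h
    have hee : ¬ (s(x, x') = s(v, par v)) := fun hc => hne' ⟨by simp [hc], hne⟩
    rcases hor with hpx | hpx'
    · -- par x = x'
      rcases hx with ⟨n, hn⟩
      have hxv : x ≠ v := by
        rintro rfl
        exact hee (by rw [hpx])
      have hn0 : n ≠ 0 := by rintro rfl; exact hxv hn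
      refine ⟨n - 1, ?_⟩
      have : par^[n] x = par^[n-1] (par x) := by
        conv_lhs => rw [show n = (n-1) + 1 by omega]
        rw [Function.iterate_succ_apply]
      rw [← hpx, ← this, hn]
    · -- par x' = x
      rcases hx with ⟨n, hn⟩
      exact ⟨n + 1, by rw [Function.iterate_succ_apply, hpx', hn]⟩

lemma pt_isAcyclic : (ptGraph par).IsAcyclic := by
  rw [isAcyclic_iff_forall_adj_isBridge]
  intro u v huv
  have key : ∀ w : W, w ≠ root → (ptGraph par).IsBridge s(w, par w) := by
    intro w hw
    rw [isBridge_iff]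
    refine And.right (a := (ptGraph par).Adj w (par w)) ⟨?_, ?_⟩
    · rw [pt_adj]
      refine ⟨fun hc => ?_, Or.inl rfl⟩
      have := hrk w hw; rw [← hc] at this; omega
    · rintro ⟨p⟩
      obtain ⟨n, hn⟩ := pt_no_escape par root hw p ⟨0, rfl⟩
      have h1 : par^[n+1] w = w := by rw [Function.iterate_succ_apply, hn]
      have h2 : rk (par^[n] (par w)) ≤ rk (par w) := pt_rk_iter_le par rk root hroot hrk n _
      rw [Function.iterate_succ_apply] at h1
      rw [h1] at h2
      have := hrk w hw
      omega
  rw [pt_adj] at huv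
  obtain ⟨hne, hor | hor⟩ := huv
  · have hu : u ≠ root := by
      rintro rfl; rw [hroot] at hor; exact hne hor
    have := key u hu; rwa [hor] at this
  · have hv : v ≠ root := by
      rintro rfl; rw [hroot] at hor; exact hne hor.symm
    have := key v hv; rw [hor] at this
    rwa [Sym2.eq_swap] at this

lemma pt_isTree : (ptGraph par).IsTree := by
  have : Nonempty W := ⟨root⟩
  constructor
  · exact ⟨fun u v => (pt_reach_root par rk root hroot hrk u).trans
      (pt_reach_root par rk root hroot hrk v).symm⟩
  · exact pt_isAcyclic par rk root hroot hrk

omit hroot hrk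

lemma pt_isLeaf {w : W} (h1 : par w ≠ w) (h2 : ∀ u, par u ≠ w) :
    IsLeaf (ptGraph par) w := by
  refine ⟨par w, ?_, ?_⟩
  · show (ptGraph par).Adj w (par w)
    rw [pt_adj]; exact ⟨fun hc => h1 hc.symm, Or.inl rfl⟩
  · intro u hu
    rw [pt_adj] at hu
    rcases hu.2 with h | h
    · exact h.symm
    · exact absurd h (h2 u)

end ParentTree

/-! ### Tree utilities -/

section TreeUtils

attribute [local instance] Classical.decEq

variable {W : Type} {T : SimpleGraph W}

lemma tree_path_eq (ht : T.IsTree) {x y : W} {p q : T.Walk x y}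
    (hp : p.IsPath) (hq : q.IsPath) : p = q :=
  (ht.existsUnique_path x y).unique hp hq

/-- The canonical path between two vertices of a tree. -/
noncomputable def tP (ht : T.IsTree) (x y : W) : T.Walk x y :=
  (Classical.choice (ht.isConnected.preconnected x y)).bypass

lemma tP_isPath (ht : T.IsTree) (x y : W) : (tP ht x y).IsPath :=
  SimpleGraph.Walk.bypass_isPath _

lemma tP_eq_of_isPath (ht : T.IsTree) {x y : W} {p : T.Walk x y} (hp : p.IsPath) :
    p = tP ht x y :=
  tree_path_eq ht hp (tP_isPath ht x y)

lemma tP_support_subset (ht : T.IsTree) {x y : W} (w : T.Walk x y) :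
    (tP ht x y).support ⊆ w.support := by
  have : tP ht x y = w.bypass := (tP_eq_of_isPath ht (SimpleGraph.Walk.bypass_isPath w)).symm
  rw [this]
  exact SimpleGraph.Walk.support_bypass_subset w

lemma tP_support_union (ht : T.IsTree) (x y z : W) :
    ∀ v ∈ (tP ht x y).support, v ∈ (tP ht x z).support ∨ v ∈ (tP ht z y).support := by
  intro v hv
  have := tP_support_subset ht ((tP ht x z).append (tP ht z y)) hv
  rwa [SimpleGraph.Walk.mem_support_append_iff] at this

lemma crossing_lemma {X Y : Set W} :
    ∀ {u v : W} (w : T.Walk u v), u ∈ X → v ∉ X → (∀ z ∈ w.support, z ∈ X ∨ z ∈ Y) →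
      ∃ x y, s(x, y) ∈ w.edges ∧ x ∈ X ∧ y ∈ Y ∧ y ∉ X := by
  intro u v w
  induction w with
  | nil => intro hu hv _; exact absurd hu hv
  | @cons u u' v h p ih =>
    intro hu hv hsup
    by_cases h' : u' ∈ X
    · obtain ⟨x, y, he, hx, hy, hyx⟩ := ih h' hv
        (fun z hz => hsup z (by rw [SimpleGraph.Walk.support_cons]; exact List.mem_cons_of_mem _ hz))
      exact ⟨x, y, by rw [SimpleGraph.Walk.edges_cons]; exact List.mem_cons_of_mem _ he, hx, hy, hyx⟩
    · have hu' : u' ∈ X ∨ u' ∈ Y := hsup u' (by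
        rw [SimpleGraph.Walk.support_cons]
        exact List.mem_cons_of_mem _ p.start_mem_support)
      refine ⟨u, u', ?_, hu, hu'.resolve_left h', h'⟩
      rw [SimpleGraph.Walk.edges_cons]
      exact List.mem_cons_self

/-- The key incompatibility lemma: in a tree, if the path `a1–ar` is disjoint from the
path `b1–bq`, then the path `a1–b1` cannot be disjoint from the path `ar–bq`. -/
lemma no_double_cross (ht : T.IsTree) {a1 ar b1 bq : W}
    (hPS : ∀ w ∈ (tP ht a1 ar).support, w ∉ (tP ht b1 bq).support)
    (hds : ∀ w ∈ (tP ht a1 b1).support, w ∉ (tP ht ar bq).support) : False := by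
  classical
  set P := tP ht a1 ar with hP
  set S := tP ht b1 bq with hS
  set p1 := tP ht a1 b1 with hp1
  set p2 := tP ht ar bq with hp2
  set X : Set W := {z | z ∈ p1.support ∧ z ∈ P.support} with hX
  set Y : Set W := {z | z ∈ S.support ∧ z ∈ p2.support} with hY
  have hQsup : ∀ z ∈ (tP ht a1 bq).support, z ∈ X ∨ z ∈ Y := by
    intro z hz
    have h1 : z ∈ p1.support ∨ z ∈ S.support := tP_support_union ht a1 bq b1 z hz
    have h2 : z ∈ P.support ∨ z ∈ p2.support := tP_support_union ht a1 bq ar z hz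
    rcases h1 with h1 | h1 <;> rcases h2 with h2 | h2
    · exact Or.inl ⟨h1, h2⟩
    · exact absurd h2 (hds z h1)
    · exact absurd h1 (hPS z h2)
    · exact Or.inr ⟨h1, h2⟩
  have ha1X : a1 ∈ X := ⟨p1.start_mem_support, P.start_mem_support⟩
  have hbqX : bq ∉ X := by
    rintro ⟨h1, _⟩
    exact hds bq h1 p2.end_mem_support
  obtain ⟨x, y, he, hx, hy, hyX⟩ := crossing_lemma (tP ht a1 bq) ha1X hbqX hQsup
  -- x ∈ p1 ∩ P, y ∈ S ∩ p2, x–y edge of T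
  have hadj : T.Adj x y := (tP ht a1 bq).adj_of_mem_edges he
  have hbridge : T.IsBridge s(x, y) :=
    (isAcyclic_iff_forall_adj_isBridge.mp ht.IsAcyclic) hadj
  rw [isBridge_iff] at hbridge
  apply hbridge
  -- build a walk from x to y in T avoiding the edge
  have hxP : x ∈ P.support := hx.2
  have hyS : y ∈ S.support := hy.1
  have w1 : T.Walk x a1 := (P.takeUntil x hxP).reverse
  have w3 : T.Walk b1 y := S.takeUntil y hyS
  have hw1e : s(x, y) ∉ ((P.takeUntil x hxP).reverse).edges := by
    intro hc
    rw [SimpleGraph.Walk.edges_reverse, List.mem_reverse] at hc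
    have := P.edges_takeUntil_subset hxP hc
    have := P.snd_mem_support_of_mem_edges this
    exact hPS y this hyS
  have hw2e : s(x, y) ∉ p1.edges := by
    intro hc
    have := p1.snd_mem_support_of_mem_edges hc
    exact hds y this hy.2
  have hw3e : s(x, y) ∉ (S.takeUntil y hyS).edges := by
    intro hc
    have := S.edges_takeUntil_subset hyS hc
    have := S.fst_mem_support_of_mem_edges this
    exact hPS x hxP this
  have wt : T.Walk x y := (((P.takeUntil x hxP).reverse).append p1).append (S.takeUntil y hyS)
  have hwt : ∀ e ∈ ((((P.takeUntil x hxP).reverse).append p1).append (S.takeUntil y hyS)).edges,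
      e ∉ ({s(x, y)} : Set (Sym2 W)) := by
    intro e hee
    rw [SimpleGraph.Walk.edges_append, SimpleGraph.Walk.edges_append] at hee
    simp only [List.mem_append] at hee
    rw [Set.mem_singleton_iff]
    rintro rfl
    rcases hee with (hee | hee) | hee
    · exact hw1e hee
    · exact hw2e hee
    · exact hw3e hee
  exact ⟨((((P.takeUntil x hxP).reverse).append p1).append (S.takeUntil y hyS)).toDeleteEdges
      {s(x, y)} hwt⟩


lemma containsQuartet_of (ht : T.IsTree) {x y z w : W} (hx : IsLeaf T x) (hy : IsLeaf T y)
    (hz : IsLeaf T z) (hw : IsLeaf T w) (hxy : x ≠ y) (hzw : z ≠ w)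
    (p : T.Walk x y) (p' : T.Walk z w) (hp : p.IsPath) (hp' : p'.IsPath)
    (hdisj : ∀ v ∈ p.support, v ∉ p'.support) : ContainsQuartet T x y z w := by
  refine ⟨hx, hy, hz, hw, hxy, hzw, fun p0 p0' h0 h0' v hv hv' => ?_⟩
  rw [tree_path_eq ht h0 hp] at hv
  exact hdisj v hv (by rwa [tree_path_eq ht h0' hp'] at hv')

end TreeUtils

/-! ### Construction machinery -/

section Constructions

attribute [local instance] Classical.decEq

variable {W : Type}

/-- A walk along a sequence of pairwise-adjacent vertices. -/
def walkSeq (G : SimpleGraph W) (f : ℕ → W) :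
    (n : ℕ) → (∀ k, k < n → G.Adj (f k) (f (k+1))) → G.Walk (f 0) (f n)
  | 0, _ => SimpleGraph.Walk.nil
  | (n+1), h => (walkSeq G f n (fun k hk => h k (by omega))).concat (h n (by omega))

lemma walkSeq_support (G : SimpleGraph W) (f : ℕ → W) (n : ℕ) (h) :
    (walkSeq G f n h).support = (List.range (n+1)).map f := by
  induction n with
  | zero => simp [walkSeq, List.range_succ]
  | succ n ih =>
    rw [walkSeq, SimpleGraph.Walk.support_concat, ih (fun k hk => h k (by omega))]
    rw [show n+1+1 = (n+1)+1 from rfl, List.range_succ (n := n+1), List.range_succ (n := n)]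
    simp

lemma walkSeq_mem_support (G : SimpleGraph W) (f : ℕ → W) (n : ℕ) (h) {v : W} :
    v ∈ (walkSeq G f n h).support ↔ ∃ k, k ≤ n ∧ f k = v := by
  rw [walkSeq_support]
  simp [List.mem_map, Nat.lt_succ_iff]

lemma walkSeq_isPath (G : SimpleGraph W) (f : ℕ → W) (n : ℕ) (h)
    (hinj : ∀ k, k ≤ n → ∀ l, l ≤ n → f k = f l → k = l) : (walkSeq G f n h).IsPath := by
  rw [SimpleGraph.Walk.isPath_def, walkSeq_support]
  exact List.Nodup.map_on
    (fun k hk l hl => hinj k (by simpa [Nat.lt_succ_iff] using hk)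
      l (by simpa [Nat.lt_succ_iff] using hl)) List.nodup_range

/-- A 4-vertex walk. -/
def w4 (G : SimpleGraph W) {x1 x2 x3 x4 : W} (h1 : G.Adj x1 x2) (h2 : G.Adj x2 x3)
    (h3 : G.Adj x3 x4) : G.Walk x1 x4 :=
  SimpleGraph.Walk.cons h1 (SimpleGraph.Walk.cons h2 (SimpleGraph.Walk.cons h3
    SimpleGraph.Walk.nil))

lemma w4_support (G : SimpleGraph W) {x1 x2 x3 x4 : W} (h1 : G.Adj x1 x2) (h2 : G.Adj x2 x3)
    (h3 : G.Adj x3 x4) : (w4 G h1 h2 h3).support = [x1, x2, x3, x4] := rfl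

lemma w4_isPath (G : SimpleGraph W) {x1 x2 x3 x4 : W} (h1 : G.Adj x1 x2) (h2 : G.Adj x2 x3)
    (h3 : G.Adj x3 x4) (e12 : x1 ≠ x2) (e13 : x1 ≠ x3) (e14 : x1 ≠ x4) (e23 : x2 ≠ x3)
    (e24 : x2 ≠ x4) (e34 : x3 ≠ x4) : (w4 G h1 h2 h3).IsPath := by
  rw [SimpleGraph.Walk.isPath_def, w4_support]
  simp_all

/-- A 5-vertex walk. -/
def w5 (G : SimpleGraph W) {x1 x2 x3 x4 x5 : W} (h1 : G.Adj x1 x2) (h2 : G.Adj x2 x3)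
    (h3 : G.Adj x3 x4) (h4 : G.Adj x4 x5) : G.Walk x1 x5 :=
  SimpleGraph.Walk.cons h1 (w4 G h2 h3 h4)

lemma w5_support (G : SimpleGraph W) {x1 x2 x3 x4 x5 : W} (h1 : G.Adj x1 x2)
    (h2 : G.Adj x2 x3) (h3 : G.Adj x3 x4) (h4 : G.Adj x4 x5) :
    (w5 G h1 h2 h3 h4).support = [x1, x2, x3, x4, x5] := rfl

lemma w5_isPath (G : SimpleGraph W) {x1 x2 x3 x4 x5 : W} (h1 : G.Adj x1 x2)
    (h2 : G.Adj x2 x3) (h3 : G.Adj x3 x4) (h4 : G.Adj x4 x5)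
    (e12 : x1 ≠ x2) (e13 : x1 ≠ x3) (e14 : x1 ≠ x4) (e15 : x1 ≠ x5) (e23 : x2 ≠ x3)
    (e24 : x2 ≠ x4) (e25 : x2 ≠ x5) (e34 : x3 ≠ x4) (e35 : x3 ≠ x5) (e45 : x4 ≠ x5) :
    (w5 G h1 h2 h3 h4).IsPath := by
  rw [SimpleGraph.Walk.isPath_def, w5_support]
  simp_all

variable {α : Type} {r q : ℕ} (a : Fin r → α) (b : Fin q → α)

/-- The spine position of each element of `α`. -/
noncomputable def attach (pa pb : ℕ → ℕ) (d : ℕ) (z : α) : ℕ :=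
  if h : ∃ i : Fin r, a i = z then pa (h.choose).val
  else if h : ∃ j : Fin q, b j = z then pb (h.choose).val
  else d

lemma attach_a (ha : Function.Injective a) (pa pb : ℕ → ℕ) (d : ℕ) (i : Fin r) :
    attach a b pa pb d (a i) = pa i.val := by
  have h : ∃ i' : Fin r, a i' = a i := ⟨i, rfl⟩
  rw [attach, dif_pos h, ha h.choose_spec]

lemma attach_b (hb : Function.Injective b) (hab : ∀ i j, a i ≠ b j) (pa pb : ℕ → ℕ) (d : ℕ)
    (j : Fin q) : attach a b pa pb d (b j) = pb j.val := by
  have h' : ¬ ∃ i : Fin r, a i = b j := by rintro ⟨i, hi⟩; exact hab i j hi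
  have h : ∃ j' : Fin q, b j' = b j := ⟨j, rfl⟩
  rw [attach, dif_neg h', dif_pos h, hb h.choose_spec]

/-- The parent function on `α ⊕ ℕ`. -/
def sumPar (att : α → ℕ) (spar : ℕ → ℕ) : α ⊕ ℕ → α ⊕ ℕ :=
  Sum.elim (fun z => Sum.inr (att z)) (fun n => Sum.inr (spar n))

/-- The rank function on `α ⊕ ℕ`. -/
def sumRk (att : α → ℕ) (srk : ℕ → ℕ) : α ⊕ ℕ → ℕ :=
  Sum.elim (fun z => srk (att z) + 1) srk

lemma sum_isTree (att : α → ℕ) (spar srk : ℕ → ℕ) (root0 : ℕ) (h1 : spar root0 = root0)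
    (hsrk : ∀ n, n ≠ root0 → srk (spar n) < srk n) :
    (ptGraph (sumPar att spar)).IsTree := by
  apply pt_isTree (sumPar att spar) (sumRk att srk) (Sum.inr root0)
  · simp [sumPar, h1]
  · rintro (z | n) hne
    · simp [sumPar, sumRk]
    · simpa [sumPar, sumRk] using hsrk n (by simpa using hne)

lemma sum_adj_inl_inr (att : α → ℕ) (spar : ℕ → ℕ) (z : α) (n : ℕ) :
    (ptGraph (sumPar att spar)).Adj (Sum.inl z) (Sum.inr n) ↔ att z = n := by
  rw [pt_adj]; simp [sumPar]

lemma sum_adj_inr_inr (att : α → ℕ) (spar : ℕ → ℕ) (n m : ℕ) :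
    (ptGraph (sumPar att spar)).Adj (Sum.inr n) (Sum.inr m) ↔
      n ≠ m ∧ (spar n = m ∨ spar m = n) := by
  rw [pt_adj]; simp [sumPar]

lemma sum_isLeaf_inl (att : α → ℕ) (spar : ℕ → ℕ) (z : α) :
    IsLeaf (ptGraph (sumPar att spar)) (Sum.inl z) := by
  apply pt_isLeaf
  · simp [sumPar]
  · rintro (u | u) <;> simp [sumPar]

end Constructions



/-! ### Part 1: incompatibility -/

theorem shutters_incompatible {α : Type} (r q : ℕ) (hr : 3 ≤ r) (hq : 3 ≤ q)
    (a : Fin r → α) (b : Fin q → α)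
    (hinj : Function.Injective (Sum.elim a b)) :
    ¬ CompatibleFam (shuttersQ r q a b) := by
  rintro ⟨W, T, ι, ht, hι, hQ⟩
  classical
  set A : ℕ → W := fun n => ι (a ⟨min n (r-1), by omega⟩) with hAdef
  set B : ℕ → W := fun n => ι (b ⟨min n (q-1), by omega⟩) with hBdef
  have hA : ∀ (i : ℕ) (h : i ≤ r-1) (h' : i < r), A i = ι (a ⟨i, h'⟩) := by
    intro i h h'
    have : (⟨min i (r-1), by omega⟩ : Fin r) = ⟨i, h'⟩ := by
      apply Fin.ext; simp [Nat.min_eq_left h]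
    simp [hAdef, this]
  have hB : ∀ (j : ℕ) (h : j ≤ q-1) (h' : j < q), B j = ι (b ⟨j, h'⟩) := by
    intro j h h'
    have : (⟨min j (q-1), by omega⟩ : Fin q) = ⟨j, h'⟩ := by
      apply Fin.ext; simp [Nat.min_eq_left h]
    simp [hBdef, this]
  have hgrid : ∀ i j : ℕ, i < r-1 → j < q-1 →
      ContainsQuartet T (A i) (A (i+1)) (B j) (B (j+1)) := by
    intro i j hi hj
    rw [hA i (by omega) (by omega), hA (i+1) (by omega) (by omega),
        hB j (by omega) (by omega), hB (j+1) (by omega) (by omega)]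
    exact hQ _ (Or.inl ⟨⟨i, by omega⟩, ⟨i+1, by omega⟩, ⟨j, by omega⟩, ⟨j+1, by omega⟩,
      rfl, rfl, rfl⟩)
  have hspec : ContainsQuartet T (A 0) (B 0) (A (r-1)) (B (q-1)) := by
    rw [hA 0 (by omega) (by omega), hA (r-1) (by omega) (by omega),
        hB 0 (by omega) (by omega), hB (q-1) (by omega) (by omega)]
    exact hQ _ (Or.inr ⟨⟨0, by omega⟩, ⟨r-1, by omega⟩, ⟨0, by omega⟩, ⟨q-1, by omega⟩,
      rfl, rfl, rfl, rfl, rfl⟩)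
  have coverA : ∀ n, 1 ≤ n → n ≤ r-1 → ∀ z ∈ (tP ht (A 0) (A n)).support,
      ∃ i, i < n ∧ z ∈ (tP ht (A i) (A (i+1))).support := by
    intro n h1 h2
    induction n with
    | zero => omega
    | succ n ih =>
      intro z hz
      by_cases hn : n = 0
      · subst hn; exact ⟨0, by omega, hz⟩
      · rcases tP_support_union ht (A 0) (A (n+1)) (A n) z hz with h | h
        · obtain ⟨i, hi, hzi⟩ := ih (by omega) (by omega) z h
          exact ⟨i, by omega, hzi⟩
        · exact ⟨n, by omega, h⟩
  have coverB : ∀ n, 1 ≤ n → n ≤ q-1 → ∀ z ∈ (tP ht (B 0) (B n)).support,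
      ∃ j, j < n ∧ z ∈ (tP ht (B j) (B (j+1))).support := by
    intro n h1 h2
    induction n with
    | zero => omega
    | succ n ih =>
      intro z hz
      by_cases hn : n = 0
      · subst hn; exact ⟨0, by omega, hz⟩
      · rcases tP_support_union ht (B 0) (B (n+1)) (B n) z hz with h | h
        · obtain ⟨j, hj, hzj⟩ := ih (by omega) (by omega) z h
          exact ⟨j, by omega, hzj⟩
        · exact ⟨n, by omega, h⟩
  have hPS : ∀ w ∈ (tP ht (A 0) (A (r-1))).support,
      w ∉ (tP ht (B 0) (B (q-1))).support := by
    intro w hw hw'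
    obtain ⟨i, hi, hwi⟩ := coverA (r-1) (by omega) le_rfl w hw
    obtain ⟨j, hj, hwj⟩ := coverB (q-1) (by omega) le_rfl w hw'
    exact (hgrid i j hi hj).2.2.2.2.2.2 (tP ht _ _) (tP ht _ _)
      (tP_isPath ht _ _) (tP_isPath ht _ _) w hwi hwj
  have hds : ∀ w ∈ (tP ht (A 0) (B 0)).support,
      w ∉ (tP ht (A (r-1)) (B (q-1))).support :=
    hspec.2.2.2.2.2.2 (tP ht _ _) (tP ht _ _) (tP_isPath ht _ _) (tP_isPath ht _ _)
  exact no_double_cross ht hPS hds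


/-! ### Construction 1: all grid quartets are compatible -/

theorem compat_no_special {α : Type} {r q : ℕ} (hr : 3 ≤ r) (hq : 3 ≤ q)
    (a : Fin r → α) (b : Fin q → α) (hinj : Function.Injective (Sum.elim a b))
    (Q' : Set (α × α × α × α))
    (hsub : ∀ t ∈ Q', ∃ (i i' : Fin r) (j j' : Fin q),
      i'.val = i.val + 1 ∧ j'.val = j.val + 1 ∧ t = (a i, a i', b j, b j')) :
    CompatibleFam Q' := by
  classical
  have ha : Function.Injective a := fun i i' h => by
    have := hinj (a₁ := Sum.inl i) (a₂ := Sum.inl i') (by simpa using h)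
    simpa using this
  have hb : Function.Injective b := fun j j' h => by
    have := hinj (a₁ := Sum.inr j) (a₂ := Sum.inr j') (by simpa using h)
    simpa using this
  have hab : ∀ i j, a i ≠ b j := fun i j h => by
    have := hinj (a₁ := Sum.inl i) (a₂ := Sum.inr j) (by simpa using h)
    simp at this
  let att : α → ℕ := attach a b (fun i => i) (fun j => r + j) 0
  let spar : ℕ → ℕ := fun n => n - 1
  let G := ptGraph (sumPar att spar)
  have hattA : ∀ i : Fin r, att (a i) = i.val := fun i => attach_a a b ha _ _ _ i
  have hattB : ∀ j : Fin q, att (b j) = r + j.val := fun j => attach_b a b hb hab _ _ _ j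
  have ht : G.IsTree := sum_isTree att spar id 0 rfl (fun n hn => by
    show id (n - 1) < id n; simp only [id]; omega)
  refine ⟨α ⊕ ℕ, G, Sum.inl, ht, Sum.inl_injective, ?_⟩
  intro t htQ
  obtain ⟨i, i', j, j', hii, hjj, rfl⟩ := hsub t htQ
  have hir : i.val < r - 1 := by have := i'.isLt; omega
  have hjq : j.val < q - 1 := by have := j'.isLt; omega
  have hA1 : G.Adj (Sum.inl (a i)) (Sum.inr i.val) := by
    rw [sum_adj_inl_inr]; exact hattA i
  have hA2 : G.Adj (Sum.inr i.val) (Sum.inr i'.val) := by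
    rw [sum_adj_inr_inr]
    exact ⟨by omega, Or.inr (by show i'.val - 1 = i.val; omega)⟩
  have hA3 : G.Adj (Sum.inr i'.val) (Sum.inl (a i')) := by
    apply SimpleGraph.Adj.symm; rw [sum_adj_inl_inr]; exact hattA i'
  have hB1 : G.Adj (Sum.inl (b j)) (Sum.inr (r + j.val)) := by
    rw [sum_adj_inl_inr]; exact hattB j
  have hB2 : G.Adj (Sum.inr (r + j.val)) (Sum.inr (r + j'.val)) := by
    rw [sum_adj_inr_inr]
    exact ⟨by omega, Or.inr (by show r + j'.val - 1 = r + j.val; omega)⟩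
  have hB3 : G.Adj (Sum.inr (r + j'.val)) (Sum.inl (b j')) := by
    apply SimpleGraph.Adj.symm; rw [sum_adj_inl_inr]; exact hattB j'
  have haii : a i ≠ a i' := fun h => by
    have := congrArg Fin.val (ha h); omega
  have hbjj : b j ≠ b j' := fun h => by
    have := congrArg Fin.val (hb h); omega
  show ContainsQuartet G (Sum.inl (a i)) (Sum.inl (a i')) (Sum.inl (b j)) (Sum.inl (b j'))
  refine containsQuartet_of ht (sum_isLeaf_inl att spar _) (sum_isLeaf_inl att spar _)
    (sum_isLeaf_inl att spar _) (sum_isLeaf_inl att spar _)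
    (by simpa using haii) (by simpa using hbjj)
    (w4 G hA1 hA2 hA3) (w4 G hB1 hB2 hB3)
    (w4_isPath G hA1 hA2 hA3 (by simp) (by simp) (by simpa using haii) (by simp [Fin.val_ne_iff]; omega)
      (by simp) (by simp))
    (w4_isPath G hB1 hB2 hB3 (by simp) (by simp) (by simpa using hbjj) (by simp; omega)
      (by simp) (by simp))
    ?_
  intro v hv hv'
  rw [w4_support] at hv hv'
  simp only [List.mem_cons, List.not_mem_nil, or_false] at hv hv'
  have k1 : ∀ (i0 : Fin r) (j0 : Fin q), (Sum.inl (a i0) : α ⊕ ℕ) ≠ Sum.inl (b j0) := by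
    intro i0 j0 h; exact hab i0 j0 (by simpa using h)
  rcases hv with rfl | rfl | rfl | rfl <;>
    rcases hv' with h | h | h | h <;>
      first
        | exact k1 i j h
        | exact k1 i j' h
        | exact k1 i' j h
        | exact k1 i' j' h
        | (simp only [Sum.inr.injEq] at h; have h1 := i.isLt; have h2 := i'.isLt; omega)
        | simp at h


/-! ### Construction 2: removing one grid quartet -/

/-- Spine parent function for construction 2. -/
def spar2 (r q I J : ℕ) (p : ℕ) : ℕ :=
  if p ≤ I then p + 1
  else if p = I + 1 then p
  else if p = I + 2 then I + 1
  else if p ≤ r + 1 then p - 1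
  else if p = r + 2 then I + 1
  else if p ≤ r + 2 + J then p - 1
  else if p ≤ r + q then p + 1
  else if p = r + q + 1 then I + 2
  else I + 1

/-- Spine rank function for construction 2. -/
def srk2 (r q I J : ℕ) (p : ℕ) : ℕ :=
  if p ≤ I then I + 1 - p
  else if p = I + 1 then 0
  else if p = I + 2 then 1
  else if p ≤ r + 1 then p - I - 1
  else if p ≤ r + 2 + J then p - (r + 1)
  else if p ≤ r + q then r + q + 3 - p
  else if p = r + q + 1 then 2
  else 1

/-- Spine position of the `a`-leaves in construction 2. -/
def paU (r I i : ℕ) : ℕ := if i ≤ I then I - i else r + I + 2 - i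

variable {r q I J p : ℕ}

lemma spar2_le_I (h : p ≤ I) : spar2 r q I J p = p + 1 := by
  unfold spar2; rw [if_pos h]

lemma spar2_root : spar2 r q I J (I + 1) = I + 1 := by
  unfold spar2; rw [if_neg (by omega), if_pos rfl]

lemma spar2_I2 : spar2 r q I J (I + 2) = I + 1 := by
  unfold spar2; rw [if_neg (by omega), if_neg (by omega), if_pos rfl]

lemma spar2_mid (h1 : I + 3 ≤ p) (h2 : p ≤ r + 1) : spar2 r q I J p = p - 1 := by
  unfold spar2
  rw [if_neg (by omega), if_neg (by omega), if_neg (by omega), if_pos h2]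

lemma spar2_r2 (hIr : I < r - 1) (hr : 3 ≤ r) : spar2 r q I J (r + 2) = I + 1 := by
  unfold spar2
  rw [if_neg (by omega), if_neg (by omega), if_neg (by omega), if_neg (by omega), if_pos rfl]

lemma spar2_vlow (hIr : I < r - 1) (h1 : r + 3 ≤ p) (h2 : p ≤ r + 2 + J) :
    spar2 r q I J p = p - 1 := by
  unfold spar2
  rw [if_neg (by omega), if_neg (by omega), if_neg (by omega), if_neg (by omega),
    if_neg (by omega), if_pos h2]

lemma spar2_vhigh (hIr : I < r - 1) (h1 : r + 2 + J < p) (h2 : p ≤ r + q) :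
    spar2 r q I J p = p + 1 := by
  unfold spar2
  rw [if_neg (by omega), if_neg (by omega), if_neg (by omega), if_neg (by omega),
    if_neg (by omega), if_neg (by omega), if_pos h2]

lemma spar2_vq (hIr : I < r - 1) (hJq : J < q - 1) (hq : 3 ≤ q) :
    spar2 r q I J (r + q + 1) = I + 2 := by
  unfold spar2
  rw [if_neg (by omega), if_neg (by omega), if_neg (by omega), if_neg (by omega),
    if_neg (by omega), if_neg (by omega), if_neg (by omega), if_pos rfl]

lemma spar2_ext (hIr : I < r - 1) (hJq : J < q - 1) (hq : 3 ≤ q) (h : r + q + 2 ≤ p) :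
    spar2 r q I J p = I + 1 := by
  unfold spar2
  rw [if_neg (by omega), if_neg (by omega), if_neg (by omega), if_neg (by omega),
    if_neg (by omega), if_neg (by omega), if_neg (by omega), if_neg (by omega)]

lemma spar2_consec (hIr : I < r - 1) (hp : p ≤ r) :
    spar2 r q I J p = p + 1 ∨ spar2 r q I J (p + 1) = p := by
  by_cases c1 : p ≤ I
  · exact Or.inl (spar2_le_I c1)
  · by_cases c2 : p = I + 1
    · right
      rw [show p + 1 = I + 2 by omega, spar2_I2]; omega
    · right
      rw [spar2_mid (by omega) (by omega)]; omega

lemma srk2_le (h : p ≤ I + 1) : srk2 r q I J p = I + 1 - p := by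
  unfold srk2
  by_cases h1 : p ≤ I
  · rw [if_pos h1]
  · rw [if_neg h1, if_pos (by omega)]; omega

lemma srk2_mid (h1 : I + 2 ≤ p) (h2 : p ≤ r + 1) : srk2 r q I J p = p - I - 1 := by
  unfold srk2
  by_cases hp : p = I + 2
  · rw [if_neg (by omega), if_neg (by omega), if_pos hp]; omega
  · rw [if_neg (by omega), if_neg (by omega), if_neg hp, if_pos h2]

lemma srk2_vlow (hIr : I < r - 1) (h1 : r + 2 ≤ p) (h2 : p ≤ r + 2 + J) :
    srk2 r q I J p = p - (r + 1) := by
  unfold srk2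
  rw [if_neg (by omega), if_neg (by omega), if_neg (by omega), if_neg (by omega), if_pos h2]

lemma srk2_vhigh (hIr : I < r - 1) (h1 : r + 2 + J < p) (h2 : p ≤ r + q) :
    srk2 r q I J p = r + q + 3 - p := by
  unfold srk2
  rw [if_neg (by omega), if_neg (by omega), if_neg (by omega), if_neg (by omega),
    if_neg (by omega), if_pos h2]

lemma srk2_vq (hIr : I < r - 1) (hJq : J < q - 1) (hq : 3 ≤ q) :
    srk2 r q I J (r + q + 1) = 2 := by
  unfold srk2
  rw [if_neg (by omega), if_neg (by omega), if_neg (by omega), if_neg (by omega),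
    if_neg (by omega), if_neg (by omega), if_pos rfl]

lemma srk2_ext (hIr : I < r - 1) (hJq : J < q - 1) (hq : 3 ≤ q) (h : r + q + 2 ≤ p) :
    srk2 r q I J p = 1 := by
  unfold srk2
  rw [if_neg (by omega), if_neg (by omega), if_neg (by omega), if_neg (by omega),
    if_neg (by omega), if_neg (by omega), if_neg (by omega)]

lemma srk2_dec (hr : 3 ≤ r) (hq : 3 ≤ q) (hIr : I < r - 1) (hJq : J < q - 1) :
    ∀ p, p ≠ I + 1 → srk2 r q I J (spar2 r q I J p) < srk2 r q I J p := by
  intro p hp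
  by_cases c1 : p ≤ I
  · rw [spar2_le_I c1, srk2_le (by omega), srk2_le (by omega)]
    omega
  · by_cases c2 : p = I + 2
    · subst c2
      rw [spar2_I2, srk2_le (by omega), srk2_mid (by omega) (by omega)]
      omega
    · by_cases c3 : p ≤ r + 1
      · rw [spar2_mid (by omega) c3, srk2_mid (by omega) c3]
        by_cases c3' : p = I + 3
        · rw [show p - 1 = I + 2 by omega, srk2_mid (by omega) (by omega)]; omega
        · rw [srk2_mid (by omega) (by omega)]; omega
      · by_cases c4 : p = r + 2
        · subst c4
          rw [spar2_r2 hIr hr, srk2_le (by omega), srk2_vlow hIr (by omega) (by omega)]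
          omega
        · by_cases c5 : p ≤ r + 2 + J
          · rw [spar2_vlow hIr (by omega) c5, srk2_vlow hIr (by omega) c5,
              srk2_vlow hIr (by omega) (by omega)]
            omega
          · by_cases c6 : p ≤ r + q
            · rw [spar2_vhigh hIr (by omega) c6, srk2_vhigh hIr (by omega) c6]
              by_cases c6' : p = r + q
              · rw [show p + 1 = r + q + 1 by omega, srk2_vq hIr hJq hq]; omega
              · rw [srk2_vhigh hIr (by omega) (by omega)]; omega
            · by_cases c7 : p = r + q + 1
              · subst c7
                rw [spar2_vq hIr hJq hq, srk2_mid (by omega) (by omega),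
                  srk2_vq hIr hJq hq]
                omega
              · rw [spar2_ext hIr hJq hq (by omega), srk2_le (by omega),
                  srk2_ext hIr hJq hq (by omega)]
                omega

lemma paU_bounds (hr : 3 ≤ r) (hIr : I < r - 1) (m : ℕ) (hm : m < r) :
    paU r I m ≤ r + 1 ∧ paU r I m ≠ I + 1 ∧ paU r I m ≠ I + 2 := by
  unfold paU; split_ifs <;> omega

lemma paU_inj (hr : 3 ≤ r) (hIr : I < r - 1) (m m' : ℕ) (hm : m < r) (hm' : m' < r)
    (h : paU r I m = paU r I m') : m = m' := by
  unfold paU at h; split_ifs at h <;> omega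

/-- The vertex sequence of the long `a`-path. -/
def fA2 {α : Type} (x y : α) (r k : ℕ) : α ⊕ ℕ :=
  if k = 0 then Sum.inl x else if k ≤ r + 2 then Sum.inr (k - 1) else Sum.inl y

/-- The vertex sequence of the long `b`-path. -/
def fB2 {α : Type} (x y : α) (r q I J k : ℕ) : α ⊕ ℕ :=
  if k = 0 then Sum.inl x
  else if k ≤ J + 1 then Sum.inr (r + 3 + J - k)
  else if k = J + 2 then Sum.inr (I + 1)
  else if k = J + 3 then Sum.inr (I + 2)
  else if k ≤ q + 2 then Sum.inr (r + q + J + 5 - k)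
  else Sum.inl y



set_option maxHeartbeats 1000000 in
theorem compat_no_grid {α : Type} {r q : ℕ} (hr : 3 ≤ r) (hq : 3 ≤ q)
    (a : Fin r → α) (b : Fin q → α) (hinj : Function.Injective (Sum.elim a b))
    (I J : ℕ) (hIr : I < r - 1) (hJq : J < q - 1)
    (Q' : Set (α × α × α × α))
    (hsub : ∀ t ∈ Q',
      (∃ (i i' : Fin r) (j j' : Fin q), i'.val = i.val + 1 ∧ j'.val = j.val + 1 ∧
        ¬(i.val = I ∧ j.val = J) ∧ t = (a i, a i', b j, b j')) ∨
      (∃ (i0 ir : Fin r) (j0 jq : Fin q), i0.val = 0 ∧ ir.val = r - 1 ∧ j0.val = 0 ∧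
        jq.val = q - 1 ∧ t = (a i0, b j0, a ir, b jq))) :
    CompatibleFam Q' := by
  classical
  have ha : Function.Injective a := fun i i' h => by
    have := hinj (a₁ := Sum.inl i) (a₂ := Sum.inl i') (by simpa using h)
    simpa using this
  have hb : Function.Injective b := fun j j' h => by
    have := hinj (a₁ := Sum.inr j) (a₂ := Sum.inr j') (by simpa using h)
    simpa using this
  have hab : ∀ i j, a i ≠ b j := fun i j h => by
    have := hinj (a₁ := Sum.inl i) (a₂ := Sum.inr j) (by simpa using h)
    simp at this
  let att : α → ℕ := attach a b (paU r I) (fun j => r + 2 + j) (I + 1)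
  let spar : ℕ → ℕ := spar2 r q I J
  let G := ptGraph (sumPar att spar)
  have hattA : ∀ i : Fin r, att (a i) = paU r I i.val := fun i => attach_a a b ha _ _ _ i
  have hattB : ∀ j : Fin q, att (b j) = r + 2 + j.val := fun j => attach_b a b hb hab _ _ _ j
  have ht : G.IsTree := sum_isTree att spar (srk2 r q I J) (I + 1) spar2_root
    (srk2_dec hr hq hIr hJq)
  -- basic adjacency helpers
  have hE : ∀ n m : ℕ, n ≠ m → (spar2 r q I J n = m ∨ spar2 r q I J m = n) →
      G.Adj (Sum.inr n) (Sum.inr m) := by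
    intro n m hne hor
    rw [sum_adj_inr_inr]; exact ⟨hne, hor⟩
  have hL : ∀ (z : α) (n : ℕ), att z = n → G.Adj (Sum.inl z) (Sum.inr n) := by
    intro z n h; rw [sum_adj_inl_inr]; exact h
  -- the short a-walk
  have shortA : ∀ (i i' : Fin r), i'.val = i.val + 1 → i.val ≠ I →
      ∃ p : G.Walk (Sum.inl (a i)) (Sum.inl (a i')), p.IsPath ∧
        p.support = [Sum.inl (a i), Sum.inr (paU r I i.val), Sum.inr (paU r I i'.val),
          Sum.inl (a i')] := by
    intro i i' hii hiI
    have hi := i.isLt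
    have hi' := i'.isLt
    have h1 : G.Adj (Sum.inl (a i)) (Sum.inr (paU r I i.val)) := hL _ _ (hattA i)
    have h2 : G.Adj (Sum.inr (paU r I i.val)) (Sum.inr (paU r I i'.val)) := by
      apply hE _ _ (fun h => by have := paU_inj hr hIr _ _ hi hi' h; omega)
      by_cases hc : i.val < I
      · right
        have e1 : paU r I i.val = I - i.val := by unfold paU; rw [if_pos (by omega)]
        have e2 : paU r I i'.val = I - i'.val := by unfold paU; rw [if_pos (by omega)]
        rw [e1, e2, spar2_le_I (by omega)]; omega
      · left
        have hgt : I < i.val := by omega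
        have e1 : paU r I i.val = r + I + 2 - i.val := by unfold paU; rw [if_neg (by omega)]
        have e2 : paU r I i'.val = r + I + 2 - i'.val := by unfold paU; rw [if_neg (by omega)]
        rw [e1, e2, spar2_mid (by omega) (by omega)]; omega
    have h3 : G.Adj (Sum.inr (paU r I i'.val)) (Sum.inl (a i')) := (hL _ _ (hattA i')).symm
    refine ⟨w4 G h1 h2 h3, w4_isPath G h1 h2 h3 (by simp) (by simp) ?_ ?_ (by simp) (by simp),
      w4_support G h1 h2 h3⟩
    · simp only [ne_eq, Sum.inl.injEq]
      intro h; have := congrArg Fin.val (ha h); omega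
    · simp only [ne_eq, Sum.inr.injEq]
      intro h; have := paU_inj hr hIr _ _ hi hi' h; omega
  -- the short b-walk
  have shortB : ∀ (j j' : Fin q), j'.val = j.val + 1 → j.val ≠ J →
      ∃ p : G.Walk (Sum.inl (b j)) (Sum.inl (b j')), p.IsPath ∧
        p.support = [Sum.inl (b j), Sum.inr (r + 2 + j.val), Sum.inr (r + 2 + j'.val),
          Sum.inl (b j')] := by
    intro j j' hjj hjJ
    have hj := j.isLt
    have hj' := j'.isLt
    have h1 : G.Adj (Sum.inl (b j)) (Sum.inr (r + 2 + j.val)) := hL _ _ (hattB j)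
    have h2 : G.Adj (Sum.inr (r + 2 + j.val)) (Sum.inr (r + 2 + j'.val)) := by
      apply hE _ _ (by omega)
      by_cases hc : j.val < J
      · right
        rw [spar2_vlow hIr (by omega) (by omega)]; omega
      · left
        rw [spar2_vhigh hIr (by omega) (by omega)]; omega
    have h3 : G.Adj (Sum.inr (r + 2 + j'.val)) (Sum.inl (b j')) := (hL _ _ (hattB j')).symm
    refine ⟨w4 G h1 h2 h3, w4_isPath G h1 h2 h3 (by simp) (by simp) ?_
      (by simp only [ne_eq, Sum.inr.injEq]; omega) (by simp) (by simp),
      w4_support G h1 h2 h3⟩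
    simp only [ne_eq, Sum.inl.injEq]
    intro h; have := congrArg Fin.val (hb h); omega
  -- the long a-walk
  have longA : ∀ (i i' : Fin r), i'.val = i.val + 1 → i.val = I →
      ∃ p : G.Walk (Sum.inl (a i)) (Sum.inl (a i')), p.IsPath ∧
        ∀ v ∈ p.support, v = Sum.inl (a i) ∨ v = Sum.inl (a i') ∨
          ∃ m, m ≤ r + 1 ∧ v = Sum.inr m := by
    intro i i' hii hiI
    have haii : a i ≠ a i' := fun h => by have := congrArg Fin.val (ha h); omega
    have hatt1 : att (a i) = 0 := by rw [hattA i, hiI]; unfold paU; rw [if_pos le_rfl]; omega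
    have hatt2 : att (a i') = r + 1 := by
      rw [hattA i', hii, hiI]; unfold paU; rw [if_neg (by omega)]; omega
    have e0 : fA2 (a i) (a i') r 0 = Sum.inl (a i) := by unfold fA2; rw [if_pos rfl]
    have eend : fA2 (a i) (a i') r (r + 3) = Sum.inl (a i') := by
      unfold fA2; rw [if_neg (by omega), if_neg (by omega)]
    have emid : ∀ k, 1 ≤ k → k ≤ r + 2 → fA2 (a i) (a i') r k = Sum.inr (k - 1) := by
      intro k h1 h2; unfold fA2; rw [if_neg (by omega), if_pos h2]
    have hadj : ∀ k, k < r + 3 → G.Adj (fA2 (a i) (a i') r k) (fA2 (a i) (a i') r (k + 1)) := by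
      intro k hk
      by_cases hk0 : k = 0
      · subst hk0
        rw [e0, emid 1 le_rfl (by omega)]
        exact hL _ _ hatt1
      · by_cases hk1 : k ≤ r + 1
        · rw [emid k (by omega) (by omega), emid (k + 1) (by omega) (by omega)]
          have := spar2_consec (q := q) (J := J) hIr (p := k - 1) (by omega)
          rw [show k - 1 + 1 = k by omega] at this
          exact hE _ _ (by omega) (by rw [show k + 1 - 1 = k by omega]; exact this)
        · have hk2 : k = r + 2 := by omega
          subst hk2
          rw [emid (r + 2) (by omega) le_rfl, eend]
          exact (hL _ _ (by rw [hatt2]; omega)).symm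
    refine ⟨(walkSeq G _ (r + 3) hadj).copy e0 eend, ?_, ?_⟩
    · rw [SimpleGraph.Walk.isPath_def, SimpleGraph.Walk.support_copy,
        ← SimpleGraph.Walk.isPath_def]
      apply walkSeq_isPath
      intro k hk l hl h
      unfold fA2 at h
      split_ifs at h <;>
        first
          | omega
          | (exact absurd (Sum.inl.inj h) haii)
          | (exact absurd (Sum.inl.inj h).symm haii)
          | (have := Sum.inr.inj h; omega)
          | simp at h
    · intro v hv
      rw [SimpleGraph.Walk.support_copy, walkSeq_mem_support] at hv
      obtain ⟨k, hk, rfl⟩ := hv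
      unfold fA2
      split_ifs with c1 c2
      · exact Or.inl rfl
      · exact Or.inr (Or.inr ⟨k - 1, by omega, rfl⟩)
      · exact Or.inr (Or.inl rfl)
  -- the long b-walk
  have longB : ∀ (j j' : Fin q), j'.val = j.val + 1 → j.val = J →
      ∃ p : G.Walk (Sum.inl (b j)) (Sum.inl (b j')), p.IsPath ∧
        ∀ v ∈ p.support, v = Sum.inl (b j) ∨ v = Sum.inl (b j') ∨ v = Sum.inr (I + 1) ∨
          v = Sum.inr (I + 2) ∨ ∃ m, r + 2 ≤ m ∧ m ≤ r + q + 1 ∧ v = Sum.inr m := by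
    intro j j' hjj hjJ
    have hbjj : b j ≠ b j' := fun h => by have := congrArg Fin.val (hb h); omega
    have hatt1 : att (b j) = r + 2 + J := by rw [hattB j, hjJ]
    have hatt2 : att (b j') = r + 3 + J := by rw [hattB j', hjj, hjJ]; omega
    have e0 : fB2 (b j) (b j') r q I J 0 = Sum.inl (b j) := by unfold fB2; rw [if_pos rfl]
    have eend : fB2 (b j) (b j') r q I J (q + 3) = Sum.inl (b j') := by
      unfold fB2
      rw [if_neg (by omega), if_neg (by omega), if_neg (by omega), if_neg (by omega),
        if_neg (by omega)]
    have elow : ∀ k, 1 ≤ k → k ≤ J + 1 → fB2 (b j) (b j') r q I J k = Sum.inr (r + 3 + J - k) := by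
      intro k h1 h2; unfold fB2; rw [if_neg (by omega), if_pos h2]
    have em : fB2 (b j) (b j') r q I J (J + 2) = Sum.inr (I + 1) := by
      unfold fB2; rw [if_neg (by omega), if_neg (by omega), if_pos rfl]
    have em' : fB2 (b j) (b j') r q I J (J + 3) = Sum.inr (I + 2) := by
      unfold fB2; rw [if_neg (by omega), if_neg (by omega), if_neg (by omega), if_pos rfl]
    have ehigh : ∀ k, J + 4 ≤ k → k ≤ q + 2 →
        fB2 (b j) (b j') r q I J k = Sum.inr (r + q + J + 5 - k) := by
      intro k h1 h2
      unfold fB2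
      rw [if_neg (by omega), if_neg (by omega), if_neg (by omega), if_neg (by omega), if_pos h2]
    have hadj : ∀ k, k < q + 3 →
        G.Adj (fB2 (b j) (b j') r q I J k) (fB2 (b j) (b j') r q I J (k + 1)) := by
      intro k hk
      by_cases hk0 : k = 0
      · subst hk0
        rw [e0, elow 1 le_rfl (by omega)]
        exact hL _ _ (by rw [hatt1]; omega)
      · by_cases hklow : k ≤ J
        · rw [elow k (by omega) (by omega), elow (k + 1) (by omega) (by omega)]
          refine hE _ _ (by omega) (Or.inl ?_)
          rw [spar2_vlow hIr (by omega) (by omega)]; omega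
        · by_cases hkJ1 : k = J + 1
          · subst hkJ1
            rw [elow (J + 1) (by omega) le_rfl, em, show r + 3 + J - (J + 1) = r + 2 by omega]
            exact hE _ _ (by omega) (Or.inl (spar2_r2 hIr hr))
          · by_cases hkJ2 : k = J + 2
            · subst hkJ2
              rw [em, em']
              exact hE _ _ (by omega) (Or.inr spar2_I2)
            · by_cases hkJ3 : k = J + 3
              · subst hkJ3
                rw [em', ehigh (J + 4) le_rfl (by omega),
                  show r + q + J + 5 - (J + 4) = r + q + 1 by omega]
                exact hE _ _ (by omega) (Or.inr (spar2_vq hIr hJq hq))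
              · by_cases hkq : k ≤ q + 1
                · rw [ehigh k (by omega) (by omega), ehigh (k + 1) (by omega) (by omega)]
                  refine hE _ _ (by omega) (Or.inr ?_)
                  rw [spar2_vhigh hIr (by omega) (by omega)]; omega
                · have hkq2 : k = q + 2 := by omega
                  subst hkq2
                  rw [ehigh (q + 2) (by omega) le_rfl, eend,
                    show r + q + J + 5 - (q + 2) = r + 3 + J by omega]
                  exact (hL _ _ (by rw [hatt2])).symm
    refine ⟨(walkSeq G _ (q + 3) hadj).copy e0 eend, ?_, ?_⟩
    · rw [SimpleGraph.Walk.isPath_def, SimpleGraph.Walk.support_copy,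
        ← SimpleGraph.Walk.isPath_def]
      apply walkSeq_isPath
      intro k hk l hl h
      unfold fB2 at h
      split_ifs at h <;>
        first
          | omega
          | (exact absurd (Sum.inl.inj h) hbjj)
          | (exact absurd (Sum.inl.inj h).symm hbjj)
          | (have := Sum.inr.inj h; omega)
          | simp at h
    · intro v hv
      rw [SimpleGraph.Walk.support_copy, walkSeq_mem_support] at hv
      obtain ⟨k, hk, rfl⟩ := hv
      unfold fB2
      split_ifs with c1 c2 c3 c4 c5
      · exact Or.inl rfl
      · exact Or.inr (Or.inr (Or.inr (Or.inr ⟨r + 3 + J - k, by omega, by omega, rfl⟩)))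
      · exact Or.inr (Or.inr (Or.inl rfl))
      · exact Or.inr (Or.inr (Or.inr (Or.inl rfl)))
      · exact Or.inr (Or.inr (Or.inr (Or.inr ⟨r + q + J + 5 - k, by omega, by omega, rfl⟩)))
      · exact Or.inr (Or.inl rfl)
  refine ⟨α ⊕ ℕ, G, Sum.inl, ht, Sum.inl_injective, ?_⟩
  intro t htQ
  rcases hsub t htQ with ⟨i, i', j, j', hii, hjj, hnot, rfl⟩ |
    ⟨i0, ir, j0, jq, hi0, hir, hj0, hjq, rfl⟩
  · -- grid quartet
    show ContainsQuartet G (Sum.inl (a i)) (Sum.inl (a i')) (Sum.inl (b j)) (Sum.inl (b j'))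
    have haii : (Sum.inl (a i) : α ⊕ ℕ) ≠ Sum.inl (a i') := by
      simp only [ne_eq, Sum.inl.injEq]
      intro h; have := congrArg Fin.val (ha h); omega
    have hbjj : (Sum.inl (b j) : α ⊕ ℕ) ≠ Sum.inl (b j') := by
      simp only [ne_eq, Sum.inl.injEq]
      intro h; have := congrArg Fin.val (hb h); omega
    have hi := i.isLt
    have hi' := i'.isLt
    have hj' := j'.isLt
    by_cases hcase : i.val = I
    · -- b-side must avoid J
      have hjJ : j.val ≠ J := fun hc => hnot ⟨hcase, hc⟩
      obtain ⟨p, hp, hpsup⟩ := longA i i' hii hcase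
      obtain ⟨p', hp', hp'sup⟩ := shortB j j' hjj hjJ
      refine containsQuartet_of ht (sum_isLeaf_inl att spar _) (sum_isLeaf_inl att spar _)
        (sum_isLeaf_inl att spar _) (sum_isLeaf_inl att spar _) haii hbjj p p' hp hp' ?_
      intro v hv hv'
      rw [hp'sup] at hv'
      simp only [List.mem_cons, List.not_mem_nil, or_false] at hv'
      rcases hpsup v hv with rfl | rfl | ⟨m, hm, rfl⟩ <;>
        rcases hv' with h | h | h | h <;>
          first
            | (exact hab _ _ (Sum.inl.inj h))
            | (have := Sum.inr.inj h; omega)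
            | simp at h
    · by_cases hcase' : j.val = J
      · obtain ⟨p, hp, hpsup⟩ := shortA i i' hii hcase
        obtain ⟨p', hp', hp'sup⟩ := longB j j' hjj hcase'
        refine containsQuartet_of ht (sum_isLeaf_inl att spar _) (sum_isLeaf_inl att spar _)
          (sum_isLeaf_inl att spar _) (sum_isLeaf_inl att spar _) haii hbjj p p' hp hp' ?_
        intro v hv hv'
        rw [hpsup] at hv
        simp only [List.mem_cons, List.not_mem_nil, or_false] at hv
        have hb1 := paU_bounds hr hIr i.val hi
        have hb2 := paU_bounds hr hIr i'.val hi'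
        rcases hv with rfl | rfl | rfl | rfl <;>
          rcases hp'sup _ hv' with h | h | h | h | ⟨m, hm1, hm2, h⟩ <;>
            first
              | (exact hab _ _ (Sum.inl.inj h))
              | (have := Sum.inr.inj h; omega)
              | simp at h
      · obtain ⟨p, hp, hpsup⟩ := shortA i i' hii hcase
        obtain ⟨p', hp', hp'sup⟩ := shortB j j' hjj hcase'
        refine containsQuartet_of ht (sum_isLeaf_inl att spar _) (sum_isLeaf_inl att spar _)
          (sum_isLeaf_inl att spar _) (sum_isLeaf_inl att spar _) haii hbjj p p' hp hp' ?_
        intro v hv hv'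
        rw [hpsup] at hv
        rw [hp'sup] at hv'
        simp only [List.mem_cons, List.not_mem_nil, or_false] at hv hv'
        have hb1 := paU_bounds hr hIr i.val hi
        have hb2 := paU_bounds hr hIr i'.val hi'
        rcases hv with rfl | rfl | rfl | rfl <;>
          rcases hv' with h | h | h | h <;>
            first
              | (exact hab _ _ (Sum.inl.inj h))
              | (have := Sum.inr.inj h; omega)
              | simp at h
  · -- special quartet
    show ContainsQuartet G (Sum.inl (a i0)) (Sum.inl (b j0)) (Sum.inl (a ir)) (Sum.inl (b jq))
    have hatt0 : att (a i0) = I := by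
      rw [hattA i0, hi0]; unfold paU; rw [if_pos (by omega)]; omega
    have hattr : att (a ir) = I + 3 := by
      rw [hattA ir, hir]; unfold paU; rw [if_neg (by omega)]; omega
    have hattb0 : att (b j0) = r + 2 := by rw [hattB j0, hj0]
    have hattbq : att (b jq) = r + q + 1 := by rw [hattB jq, hjq]; omega
    have h11 : G.Adj (Sum.inl (a i0)) (Sum.inr I) := hL _ _ hatt0
    have h12 : G.Adj (Sum.inr I) (Sum.inr (I + 1)) :=
      hE _ _ (by omega) (Or.inl (spar2_le_I le_rfl))
    have h13 : G.Adj (Sum.inr (I + 1)) (Sum.inr (r + 2)) :=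
      hE _ _ (by omega) (Or.inr (spar2_r2 hIr hr))
    have h14 : G.Adj (Sum.inr (r + 2)) (Sum.inl (b j0)) := (hL _ _ hattb0).symm
    have h21 : G.Adj (Sum.inl (a ir)) (Sum.inr (I + 3)) := hL _ _ hattr
    have h22 : G.Adj (Sum.inr (I + 3)) (Sum.inr (I + 2)) :=
      hE _ _ (by omega) (Or.inl (by rw [spar2_mid le_rfl (by omega)]; omega))
    have h23 : G.Adj (Sum.inr (I + 2)) (Sum.inr (r + q + 1)) :=
      hE _ _ (by omega) (Or.inr (spar2_vq hIr hJq hq))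
    have h24 : G.Adj (Sum.inr (r + q + 1)) (Sum.inl (b jq)) := (hL _ _ hattbq).symm
    have k1 : ∀ (x : Fin r) (y : Fin q), (Sum.inl (a x) : α ⊕ ℕ) ≠ Sum.inl (b y) := by
      intro x y h; exact hab x y (Sum.inl.inj h)
    have hne1 : (Sum.inl (a i0) : α ⊕ ℕ) ≠ Sum.inl (b j0) := k1 _ _
    have hne2 : (Sum.inl (a ir) : α ⊕ ℕ) ≠ Sum.inl (b jq) := k1 _ _
    have hneaa : (Sum.inl (a i0) : α ⊕ ℕ) ≠ Sum.inl (a ir) := by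
      simp only [ne_eq, Sum.inl.injEq]
      intro h; have := congrArg Fin.val (ha h); omega
    have hnebb : (Sum.inl (b j0) : α ⊕ ℕ) ≠ Sum.inl (b jq) := by
      simp only [ne_eq, Sum.inl.injEq]
      intro h; have := congrArg Fin.val (hb h); omega
    refine containsQuartet_of ht (sum_isLeaf_inl att spar _) (sum_isLeaf_inl att spar _)
      (sum_isLeaf_inl att spar _) (sum_isLeaf_inl att spar _) hne1 hne2
      (w5 G h11 h12 h13 h14) (w5 G h21 h22 h23 h24)
      (w5_isPath G h11 h12 h13 h14 (by simp) (by simp) (by simp) hne1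
        (by simp only [ne_eq, Sum.inr.injEq]; omega) (by simp only [ne_eq, Sum.inr.injEq]; omega)
        (by simp) (by simp only [ne_eq, Sum.inr.injEq]; omega) (by simp) (by simp))
      (w5_isPath G h21 h22 h23 h24 (by simp) (by simp) (by simp) hne2
        (by simp only [ne_eq, Sum.inr.injEq]; omega) (by simp only [ne_eq, Sum.inr.injEq]; omega)
        (by simp) (by simp only [ne_eq, Sum.inr.injEq]; omega) (by simp) (by simp))
      ?_
    intro v hv hv'
    rw [w5_support] at hv hv'
    simp only [List.mem_cons, List.not_mem_nil, or_false] at hv hv'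
    rcases hv with rfl | rfl | rfl | rfl | rfl <;>
      rcases hv' with h | h | h | h | h <;>
        first
          | (exact k1 _ _ h)
          | (exact k1 _ _ h.symm)
          | (exact hneaa h)
          | (exact hnebb h)
          | (exact absurd (congrArg Fin.val (ha (Sum.inl.inj h))) (by omega))
          | (exact absurd (congrArg Fin.val (hb (Sum.inl.inj h))) (by omega))
          | (have := Sum.inr.inj h; omega)
          | simp at h

/-- for `r, q ≥ 3` and distinct elements `a_1, …, a_r, b_1, …, b_q`,
the quartet set `Q = { a_i a_{i+1} | b_j b_{j+1} } ∪ { a_1 b_1 | a_r b_q }` is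
incompatible, and every proper subset of `Q` is compatible. -/
theorem stmt_11 {α : Type} (r q : ℕ) (hr : 3 ≤ r) (hq : 3 ≤ q)
    (a : Fin r → α) (b : Fin q → α)
    (hinj : Function.Injective (Sum.elim a b)) :
    ¬ CompatibleFam (shuttersQ r q a b) ∧
      ∀ Q' : Set (α × α × α × α), Q' ⊂ shuttersQ r q a b → CompatibleFam Q' := by
  constructor
  · exact shutters_incompatible r q hr hq a b hinj
  · intro Q' hss
    obtain ⟨t, htQ, htQ'⟩ := Set.exists_of_ssubset hss
    have hsubQ : Q' ⊆ shuttersQ r q a b := hss.subset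
    rcases htQ with ⟨i, i', j, j', hii, hjj, rfl⟩ |
      ⟨i0, ir, j0, jq, hi0, hir, hj0, hjq, rfl⟩
    · -- missing a grid quartet
      have hIr : i.val < r - 1 := by have := i'.isLt; omega
      have hJq : j.val < q - 1 := by have := j'.isLt; omega
      apply compat_no_grid hr hq a b hinj i.val j.val hIr hJq
      intro t' ht'
      rcases hsubQ ht' with ⟨i2, i2', j2, j2', hii2, hjj2, rfl⟩ |
        ⟨a0, a1, b0, b1, h0, h1, h2, h3, rfl⟩
      · left
        refine ⟨i2, i2', j2, j2', hii2, hjj2, ?_, rfl⟩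
        rintro ⟨hiI, hjJ⟩
        have e1 : i2 = i := Fin.ext hiI
        have e2 : i2' = i' := Fin.ext (by omega)
        have e3 : j2 = j := Fin.ext hjJ
        have e4 : j2' = j' := Fin.ext (by omega)
        subst e1; subst e2; subst e3; subst e4
        exact htQ' ht'
      · exact Or.inr ⟨a0, a1, b0, b1, h0, h1, h2, h3, rfl⟩
    · -- missing the special quartet
      apply compat_no_special hr hq a b hinj
      intro t' ht'
      rcases hsubQ ht' with ⟨i2, i2', j2, j2', hii2, hjj2, rfl⟩ |
        ⟨a0, a1, b0, b1, h0, h1, h2, h3, rfl⟩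
      · exact ⟨i2, i2', j2, j2', hii2, hjj2, rfl⟩
      · exfalso
        have e1 : a0 = i0 := Fin.ext (by omega)
        have e2 : a1 = ir := Fin.ext (by omega)
        have e3 : b0 = j0 := Fin.ext (by omega)
        have e4 : b1 = jq := Fin.ext (by omega)
        subst e1; subst e2; subst e3; subst e4
        exact htQ' ht'

end LeafPaper
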